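/- Let φ : [0,1] → ℝ be convex. Then (1/2)(φ(1/4) + φ(3/4)) ≤ ∫_0^1 φ(t) dt ≤ (1/2)(φ(1/2) + (φ(0)+φ(1))/2). -/

import Mathlib

open MeasureTheory

private lemma mem01 {t : ℝ} (h0 : 0 ≤ t) (h1 : t ≤ 1) : t ∈ Set.Icc (0:ℝ) 1 :=
  Set.mem_Icc.2 ⟨h0, h1⟩

private lemma convex_bound (φ : ℝ → ℝ) (hφ : ConvexOn ℝ (Set.Icc (0:ℝ) 1) φ)
    {t : ℝ} (h0 : 0 ≤ t) (h1 : t ≤ 1) :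
    |φ t| ≤ 2 * |φ 0| + 2 * |φ 1| + 2 * |φ (1/2)| := by
  have hub : φ t ≤ (1 - t) * φ 0 + t * φ 1 := by
    have := hφ.2 (mem01 le_rfl one_pos.le) (mem01 one_pos.le le_rfl)
      (by linarith : (0:ℝ) ≤ 1 - t) h0 (by ring)
    simpa using this
  have hub' : φ (1 - t) ≤ t * φ 0 + (1 - t) * φ 1 := by
    have := hφ.2 (mem01 le_rfl one_pos.le) (mem01 one_pos.le le_rfl)
      h0 (by linarith : (0:ℝ) ≤ 1 - t) (by ring)
    simpa using this
  have hlb : φ (1/2) ≤ (1/2) * φ t + (1/2) * φ (1 - t) := by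
    have := hφ.2 (mem01 h0 h1) (show (1-t) ∈ Set.Icc (0:ℝ) 1 from mem01 (by linarith) (by linarith))
      (by norm_num : (0:ℝ) ≤ 1/2) (by norm_num : (0:ℝ) ≤ 1/2) (by norm_num)
    have e : (1/2 : ℝ) • t + (1/2 : ℝ) • (1 - t) = 1/2 := by
      simp only [smul_eq_mul]; ring
    rw [e] at this; simpa using this
  have u0 := le_abs_self (φ 0); have u1 := le_abs_self (φ 1)
  have l2 := neg_abs_le (φ (1/2))
  have a0 := abs_nonneg (φ 0); have a1 := abs_nonneg (φ 1)
  rw [abs_le]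
  constructor
  · nlinarith [mul_le_mul_of_nonneg_left u0 h0, mul_le_mul_of_nonneg_left u1 h0,
      mul_le_mul_of_nonneg_left u0 (by linarith : (0:ℝ) ≤ 1 - t),
      mul_le_mul_of_nonneg_left u1 (by linarith : (0:ℝ) ≤ 1 - t)]
  · nlinarith [mul_le_mul_of_nonneg_left u0 h0, mul_le_mul_of_nonneg_left u1 h0,
      mul_le_mul_of_nonneg_left u0 (by linarith : (0:ℝ) ≤ 1 - t),
      mul_le_mul_of_nonneg_left u1 (by linarith : (0:ℝ) ≤ 1 - t)]

private lemma phi_integrable (φ : ℝ → ℝ) (hφ : ConvexOn ℝ (Set.Icc (0:ℝ) 1) φ) :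
    IntervalIntegrable φ volume 0 1 := by
  rw [intervalIntegrable_iff_integrableOn_Ioc_of_le one_pos.le,
    integrableOn_Ioc_iff_integrableOn_Ioo]
  have hcont : ContinuousOn φ (Set.Ioo (0:ℝ) 1) := by
    have := hφ.continuousOn_interior
    rwa [interior_Icc] at this
  refine ⟨hcont.aestronglyMeasurable measurableSet_Ioo, ?_⟩
  apply MeasureTheory.HasFiniteIntegral.restrict_of_bounded
    (C := 2 * |φ 0| + 2 * |φ 1| + 2 * |φ (1/2)|) (by simp)
  filter_upwards [ae_restrict_mem measurableSet_Ioo] with t ht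
  exact convex_bound φ hφ ht.1.le ht.2.le

private lemma lin_int (a b p q : ℝ) :
    (∫ t in p..q, (a * t + b)) = a * (q^2 - p^2) / 2 + b * (q - p) := by
  have h1 : IntervalIntegrable (fun t : ℝ => a * t) volume p q :=
    (continuous_const.mul continuous_id).intervalIntegrable _ _
  rw [intervalIntegral.integral_add h1 intervalIntegrable_const,
    intervalIntegral.integral_const_mul, integral_id, intervalIntegral.integral_const,
    smul_eq_mul]
  ring

theorem hermite_hadamard_refined (φ : ℝ → ℝ)
    (hφ : ConvexOn ℝ (Set.Icc (0:ℝ) 1) φ) :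
    (1 / 2) * (φ (1/4) + φ (3/4)) ≤ (∫ t in (0:ℝ)..1, φ t) ∧
      (∫ t in (0:ℝ)..1, φ t) ≤ (1 / 2) * (φ (1/2) + (φ 0 + φ 1) / 2) := by
  have hint : IntervalIntegrable φ volume 0 1 := phi_integrable φ hφ
  have hi1 : IntervalIntegrable φ volume 0 (1/2) :=
    hint.mono_set (by rw [Set.uIcc_of_le (by norm_num), Set.uIcc_of_le one_pos.le]
                      exact Set.Icc_subset_Icc le_rfl (by norm_num))
  have hi2 : IntervalIntegrable φ volume (1/2) 1 :=
    hint.mono_set (by rw [Set.uIcc_of_le (by norm_num), Set.uIcc_of_le one_pos.le]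
                      exact Set.Icc_subset_Icc (by norm_num) le_rfl)
  have hsplit : (∫ t in (0:ℝ)..1, φ t)
      = (∫ t in (0:ℝ)..(1/2), φ t) + ∫ t in (1/2:ℝ)..1, φ t :=
    (intervalIntegral.integral_add_adjacent_intervals hi1 hi2).symm
  constructor
  · -- lower bound
    have c1 : IntervalIntegrable (fun t => φ ((1/2) - t)) volume 0 (1/2) := by
      have := hi1.comp_sub_left (1/2)
      norm_num at this
      exact this.symm
    have c2 : IntervalIntegrable (fun t => φ ((3/2) - t)) volume (1/2) 1 := by
      have := hi2.comp_sub_left (3/2)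
      norm_num at this
      exact this.symm
    have r1 : (∫ t in (0:ℝ)..(1/2), φ ((1/2) - t)) = ∫ t in (0:ℝ)..(1/2), φ t := by
      rw [intervalIntegral.integral_comp_sub_left φ (1/2)]; norm_num
    have r2 : (∫ t in (1/2:ℝ)..1, φ ((3/2) - t)) = ∫ t in (1/2:ℝ)..1, φ t := by
      rw [intervalIntegral.integral_comp_sub_left φ (3/2)]; norm_num
    have m1 : (1/2 : ℝ) * φ (1/4) ≤ ∫ t in (0:ℝ)..(1/2), φ t := by
      have key : (∫ t in (0:ℝ)..(1/2), (φ (1/4) : ℝ)) ≤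
          ∫ t in (0:ℝ)..(1/2), ((1/2) * φ t + (1/2) * φ ((1/2) - t)) := by
        apply intervalIntegral.integral_mono_on (by norm_num) intervalIntegrable_const
          ((hi1.const_mul (1/2:ℝ)).add (c1.const_mul (1/2:ℝ)))
        intro t ht
        obtain ⟨h0, h1⟩ := ht
        have := hφ.2 (mem01 h0 (by linarith)) (show ((1:ℝ)/2 - t) ∈ Set.Icc (0:ℝ) 1 from mem01 (by linarith) (by linarith))
          (by norm_num : (0:ℝ) ≤ 1/2) (by norm_num : (0:ℝ) ≤ 1/2) (by norm_num)
        have e : (1/2 : ℝ) • t + (1/2 : ℝ) • ((1/2) - t) = 1/4 := by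
          simp only [smul_eq_mul]; ring
        rw [e] at this; simpa using this
      rw [intervalIntegral.integral_const,
        intervalIntegral.integral_add (hi1.const_mul _) (c1.const_mul _),
        intervalIntegral.integral_const_mul, intervalIntegral.integral_const_mul, r1,
        smul_eq_mul] at key
      linarith
    have m2 : (1/2 : ℝ) * φ (3/4) ≤ ∫ t in (1/2:ℝ)..1, φ t := by
      have key : (∫ t in (1/2:ℝ)..1, (φ (3/4) : ℝ)) ≤
          ∫ t in (1/2:ℝ)..1, ((1/2) * φ t + (1/2) * φ ((3/2) - t)) := by
        apply intervalIntegral.integral_mono_on (by norm_num) intervalIntegrable_const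
          ((hi2.const_mul (1/2:ℝ)).add (c2.const_mul (1/2:ℝ)))
        intro t ht
        obtain ⟨h0, h1⟩ := ht
        have := hφ.2 (mem01 (by linarith) h1) (show ((3:ℝ)/2 - t) ∈ Set.Icc (0:ℝ) 1 from mem01 (by linarith) (by linarith))
          (by norm_num : (0:ℝ) ≤ 1/2) (by norm_num : (0:ℝ) ≤ 1/2) (by norm_num)
        have e : (1/2 : ℝ) • t + (1/2 : ℝ) • ((3/2) - t) = 3/4 := by
          simp only [smul_eq_mul]; ring
        rw [e] at this; simpa using this
      rw [intervalIntegral.integral_const,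
        intervalIntegral.integral_add (hi2.const_mul _) (c2.const_mul _),
        intervalIntegral.integral_const_mul, intervalIntegral.integral_const_mul, r2,
        smul_eq_mul] at key
      linarith
    rw [hsplit]; linarith
  · -- upper bound
    have m1 : (∫ t in (0:ℝ)..(1/2), φ t) ≤ (1/4) * φ 0 + (1/4) * φ (1/2) := by
      have key : (∫ t in (0:ℝ)..(1/2), φ t) ≤
          ∫ t in (0:ℝ)..(1/2), ((2 * φ (1/2) - 2 * φ 0) * t + φ 0) := by
        apply intervalIntegral.integral_mono_on (by norm_num) hi1
          (((continuous_const.mul continuous_id).add continuous_const).intervalIntegrable _ _)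
        intro t ht
        obtain ⟨h0, h1⟩ := ht
        have := hφ.2 (mem01 le_rfl one_pos.le) (show (1/2:ℝ) ∈ Set.Icc (0:ℝ) 1 from mem01 (by norm_num) (by norm_num))
          (by linarith : (0:ℝ) ≤ 1 - 2*t) (by linarith : (0:ℝ) ≤ 2*t)
          (by ring)
        have e : (1 - 2*t) • (0:ℝ) + (2*t) • (1/2:ℝ) = t := by
          simp only [smul_eq_mul]; ring
        rw [e] at this
        simp only [smul_eq_mul] at this
        simp only [Pi.add_apply, Pi.mul_apply, id_eq]
        nlinarith [this]
      rw [lin_int] at key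
      nlinarith [key]
    have m2 : (∫ t in (1/2:ℝ)..1, φ t) ≤ (1/4) * φ (1/2) + (1/4) * φ 1 := by
      have key : (∫ t in (1/2:ℝ)..1, φ t) ≤
          ∫ t in (1/2:ℝ)..1, ((2 * φ 1 - 2 * φ (1/2)) * t + (2 * φ (1/2) - φ 1)) := by
        apply intervalIntegral.integral_mono_on (by norm_num) hi2
          (((continuous_const.mul continuous_id).add continuous_const).intervalIntegrable _ _)
        intro t ht
        obtain ⟨h0, h1⟩ := ht
        have := hφ.2 (show (1/2:ℝ) ∈ Set.Icc (0:ℝ) 1 from mem01 (by norm_num) (by norm_num)) (mem01 one_pos.le le_rfl)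
          (by linarith : (0:ℝ) ≤ 2 - 2*t) (by linarith : (0:ℝ) ≤ 2*t - 1)
          (by ring)
        have e : (2 - 2*t) • (1/2:ℝ) + (2*t - 1) • (1:ℝ) = t := by
          simp only [smul_eq_mul]; ring
        rw [e] at this
        simp only [smul_eq_mul] at this
        simp only [Pi.add_apply, Pi.mul_apply, id_eq]
        nlinarith [this]
      rw [lin_int] at key
      nlinarith [key]
    rw [hsplit]; linarith
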